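/- Let (X,d) be a metric space, τ > 0, and let F : X → ℝ be bounded from below. Let (u_k)_{k∈ℕ} be a minimizing movement sequence for F with step size τ, i.e. for every k and every u ∈ X: F(u_{k+1}) + d(u_{k+1}, u_k)²/(2τ) ≤ F(u) + d(u, u_k)²/(2τ). Let γ : [0,∞) → X be an interpolating curve that is constant-speed on each time interval, i.e. for every k ∈ ℕ and all s, t ∈ [kτ, (k+1)τ]: d(γ(s), γ(t)) = (|t − s|/τ) · d(u_k, u_{k+1}) (in particular γ(kτ) = u_k). Then for all 0 ≤ s ≤ t: d(γ(s), γ(t))² ≤ 6 ( F(u₀) − ⨅_{n∈ℕ} F(u_n) ) (t − s). -/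

import Mathlib

section Aux

variable {X : Type*} [MetricSpace X]

private lemma mm_dec (τ : ℝ) (hτ : 0 < τ) (F : X → ℝ) (u : ℕ → X)
    (hmin : ∀ k, ∀ v, F (u (k + 1)) + dist (u (k + 1)) (u k) ^ 2 / (2 * τ)
      ≤ F v + dist v (u k) ^ 2 / (2 * τ)) (k : ℕ) :
    dist (u k) (u (k + 1)) ^ 2 ≤ 2 * τ * (F (u k) - F (u (k + 1))) := by
  have h := hmin k (u k)
  simp only [dist_self] at h
  rw [dist_comm]
  have h2τ : 0 < 2 * τ := by linarith
  have h3 : dist (u (k + 1)) (u k) ^ 2 / (2 * τ) ≤ F (u k) - F (u (k + 1)) := by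
    simp at h; linarith
  have h4 := (div_le_iff₀ h2τ).1 h3
  linarith

private lemma mm_anti (τ : ℝ) (hτ : 0 < τ) (F : X → ℝ) (u : ℕ → X)
    (hmin : ∀ k, ∀ v, F (u (k + 1)) + dist (u (k + 1)) (u k) ^ 2 / (2 * τ)
      ≤ F v + dist v (u k) ^ 2 / (2 * τ)) :
    Antitone (fun k => F (u k)) := by
  apply antitone_nat_of_succ_le
  intro k
  have h := mm_dec τ hτ F u hmin k
  nlinarith [sq_nonneg (dist (u k) (u (k + 1)))]

private lemma mm_sum (τ : ℝ) (hτ : 0 < τ) (F : X → ℝ) (u : ℕ → X)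
    (hmin : ∀ k, ∀ v, F (u (k + 1)) + dist (u (k + 1)) (u k) ^ 2 / (2 * τ)
      ≤ F v + dist v (u k) ^ 2 / (2 * τ)) (m N : ℕ) :
    ∑ i ∈ Finset.range N, dist (u (m + i)) (u (m + i + 1)) ^ 2
      ≤ 2 * τ * (F (u m) - F (u (m + N))) := by
  induction N with
  | zero => simp
  | succ N ih =>
    rw [Finset.sum_range_succ]
    have h := mm_dec τ hτ F u hmin (m + N)
    have : m + (N + 1) = m + N + 1 := by ring
    rw [this]
    nlinarith [h, ih]

private lemma three_sq_bound (A B C : ℝ) : (A + B + C) ^ 2 ≤ 3 * (A ^ 2 + B ^ 2 + C ^ 2) := by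
  nlinarith [sq_nonneg (A - B), sq_nonneg (B - C), sq_nonneg (A - C)]

end Aux

/-- Uniform (1/2)-Hölder estimate for the constant-speed interpolation of a
minimizing movement sequence. -/
theorem minimizing_movement_hoelder_interpolation {X : Type*} [MetricSpace X]
    (τ : ℝ) (hτ : 0 < τ) (F : X → ℝ) (hF : BddBelow (Set.range F)) (u : ℕ → X)
    (hmin : ∀ k, ∀ v, F (u (k + 1)) + dist (u (k + 1)) (u k) ^ 2 / (2 * τ)
      ≤ F v + dist v (u k) ^ 2 / (2 * τ))
    (γ : ℝ → X)
    (hγ : ∀ k : ℕ, γ (k * τ) = u k)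
    (hspeed : ∀ k : ℕ, ∀ s t : ℝ, s ∈ Set.Icc ((k : ℝ) * τ) ((k + 1 : ℝ) * τ) →
      t ∈ Set.Icc ((k : ℝ) * τ) ((k + 1 : ℝ) * τ) →
      dist (γ s) (γ t) = (|t - s| / τ) * dist (u k) (u (k + 1))) :
    ∀ s t : ℝ, 0 ≤ s → s ≤ t →
      dist (γ s) (γ t) ^ 2 ≤ 6 * (F (u 0) - ⨅ n : ℕ, F (u n)) * (t - s) := by
  intro s t hs hst
  have ht0 : 0 ≤ t := le_trans hs hst
  have hbb : BddBelow (Set.range fun n : ℕ => F (u n)) :=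
    hF.mono (Set.range_comp_subset_range u F)
  have hinf_le : ∀ n : ℕ, (⨅ n : ℕ, F (u n)) ≤ F (u n) := fun n => ciInf_le hbb n
  have hanti := mm_anti τ hτ F u hmin
  suffices hmain : ∀ D : ℝ, 0 ≤ D → (∀ a b : ℕ, F (u a) - F (u b) ≤ D) →
      dist (γ s) (γ t) ^ 2 ≤ 6 * D * (t - s) by
    apply hmain
    · have h1 := hinf_le 0; linarith
    · intro a b
      have h1 : F (u a) ≤ F (u 0) := hanti (Nat.zero_le a)
      have h2 := hinf_le b
      linarith
  intro D hD hDk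
  have hdistsq : ∀ k : ℕ, dist (u k) (u (k + 1)) ^ 2 ≤ 2 * τ * D := by
    intro k
    have h := mm_dec τ hτ F u hmin k
    have h2 := hDk k (k + 1)
    nlinarith
  obtain ⟨m, n, hmn, hsmem, htmem⟩ :
      ∃ m n : ℕ, m ≤ n ∧ s ∈ Set.Icc ((m : ℝ) * τ) ((m + 1 : ℝ) * τ)
        ∧ t ∈ Set.Icc ((n : ℝ) * τ) ((n + 1 : ℝ) * τ) := by
    refine ⟨⌊s / τ⌋₊, ⌊t / τ⌋₊, Nat.floor_mono (by gcongr), ⟨?_, ?_⟩, ⟨?_, ?_⟩⟩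
    · have h1 := Nat.floor_le (div_nonneg hs hτ.le)
      have := (le_div_iff₀ hτ).1 h1; linarith
    · have h1 : s / τ < (⌊s / τ⌋₊ : ℝ) + 1 := Nat.lt_floor_add_one (s / τ)
      have := (div_lt_iff₀ hτ).1 h1; linarith
    · have h1 := Nat.floor_le (div_nonneg ht0 hτ.le)
      have := (le_div_iff₀ hτ).1 h1; linarith
    · have h1 : t / τ < (⌊t / τ⌋₊ : ℝ) + 1 := Nat.lt_floor_add_one (t / τ)
      have := (div_lt_iff₀ hτ).1 h1; linarith
  rcases eq_or_lt_of_le hmn with heq | hlt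
  · -- same interval
    subst heq
    have hdist := hspeed m s t hsmem htmem
    rw [hdist, abs_of_nonneg (by linarith)]
    have hd2 := hdistsq m
    have hts : t - s ≤ τ := by
      rcases hsmem with ⟨h1, _⟩; rcases htmem with ⟨_, h2⟩; push_cast at h2; linarith
    have h0 : 0 ≤ t - s := by linarith
    have hdnn : (0:ℝ) ≤ dist (u m) (u (m + 1)) := dist_nonneg
    rw [mul_pow, div_pow, div_mul_eq_mul_div, div_le_iff₀ (by positivity : (0:ℝ) < τ ^ 2)]
    calc (t - s) ^ 2 * dist (u m) (u (m + 1)) ^ 2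
        ≤ (t - s) ^ 2 * (2 * τ * D) := mul_le_mul_of_nonneg_left hd2 (sq_nonneg (t - s))
      _ ≤ ((t - s) * τ) * (2 * τ * D) :=
          mul_le_mul_of_nonneg_right
            (by rw [sq]; exact mul_le_mul_of_nonneg_left hts h0) (by positivity)
      _ = 2 * D * (t - s) * τ ^ 2 := by ring
      _ ≤ 6 * D * (t - s) * τ ^ 2 := by
          have := mul_nonneg (mul_nonneg hD h0) (sq_nonneg τ)
          linarith
  · -- m < n
    have hm1n : m + 1 ≤ n := hlt
    obtain ⟨N, hnN⟩ : ∃ N : ℕ, n = m + 1 + N := ⟨n - (m + 1), by omega⟩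
    obtain ⟨a, ha⟩ : ∃ a : ℝ, a = ((m : ℝ) + 1) * τ - s := ⟨_, rfl⟩
    obtain ⟨b, hb⟩ : ∃ b : ℝ, b = t - (n : ℝ) * τ := ⟨_, rfl⟩
    have hsmem' := hsmem
    rcases hsmem with ⟨hs1, hs2⟩
    rcases htmem with ⟨ht1, ht2⟩
    push_cast at hs2 ht2
    have ha0 : 0 ≤ a := by rw [ha]; linarith
    have haτ : a ≤ τ := by rw [ha]; nlinarith
    have hb0 : 0 ≤ b := by rw [hb]; linarith
    have hbτ : b ≤ τ := by rw [hb]; nlinarith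
    have hγm1 : γ (((m : ℝ) + 1) * τ) = u (m + 1) := by
      have := hγ (m + 1); push_cast at this; exact this
    have hγn : γ ((n : ℝ) * τ) = u n := hγ n
    -- A
    have hA : dist (γ s) (u (m + 1)) = (a / τ) * dist (u m) (u (m + 1)) := by
      have hmem2 : ((m : ℝ) + 1) * τ ∈ Set.Icc ((m : ℝ) * τ) ((m + 1 : ℝ) * τ) := by
        constructor <;> push_cast <;> nlinarith
      have h := hspeed m s (((m : ℝ) + 1) * τ) hsmem' hmem2
      rw [hγm1] at h
      rw [h, abs_of_nonneg (by linarith), ha]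
    -- C
    have hC : dist (u n) (γ t) = (b / τ) * dist (u n) (u (n + 1)) := by
      have hmem2 : (n : ℝ) * τ ∈ Set.Icc ((n : ℝ) * τ) ((n + 1 : ℝ) * τ) := by
        constructor <;> push_cast <;> nlinarith
      have h := hspeed n ((n : ℝ) * τ) t hmem2 ⟨ht1, by push_cast; linarith⟩
      rw [hγn] at h
      rw [h, abs_of_nonneg (by linarith), hb]
    -- B
    obtain ⟨B, hBdef⟩ : ∃ B : ℝ, B = dist (u (m + 1)) (u n) := ⟨_, rfl⟩
    obtain ⟨S, hS⟩ : ∃ S : ℝ,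
        S = ∑ i ∈ Finset.range N, dist (u (m + 1 + i)) (u (m + 1 + i + 1)) := ⟨_, rfl⟩
    have hBle : B ≤ S := by
      have h := dist_le_range_sum_dist (fun i => u (m + 1 + i)) N
      rw [hBdef, hS, hnN]
      simpa [add_assoc] using h
    have hS0 : 0 ≤ S := by
      rw [hS]; exact Finset.sum_nonneg fun i _ => dist_nonneg
    have hB0 : 0 ≤ B := hBdef ▸ dist_nonneg
    have hBsq : B ^ 2 ≤ (N : ℝ) * (2 * τ * D) := by
      have hcs : S ^ 2 ≤ (N : ℝ) *
          ∑ i ∈ Finset.range N, dist (u (m + 1 + i)) (u (m + 1 + i + 1)) ^ 2 := by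
        rw [hS]
        have := sq_sum_le_card_mul_sum_sq
          (s := Finset.range N) (f := fun i => dist (u (m + 1 + i)) (u (m + 1 + i + 1)))
        simpa using this
      have hsum : ∑ i ∈ Finset.range N, dist (u (m + 1 + i)) (u (m + 1 + i + 1)) ^ 2
          ≤ 2 * τ * D := by
        have h := mm_sum τ hτ F u hmin (m + 1) N
        have h2 := hDk (m + 1) (m + 1 + N)
        refine h.trans ?_
        exact mul_le_mul_of_nonneg_left h2 (by linarith)
      have h3 : (N : ℝ) * (∑ i ∈ Finset.range N,
            dist (u (m + 1 + i)) (u (m + 1 + i + 1)) ^ 2) ≤ (N : ℝ) * (2 * τ * D) :=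
        mul_le_mul_of_nonneg_left hsum (Nat.cast_nonneg N)
      exact (pow_le_pow_left₀ hB0 hBle 2).trans (hcs.trans h3)
    -- triangle
    obtain ⟨A, hAdef⟩ : ∃ A : ℝ, A = (a / τ) * dist (u m) (u (m + 1)) := ⟨_, rfl⟩
    obtain ⟨C, hCdef⟩ : ∃ C : ℝ, C = (b / τ) * dist (u n) (u (n + 1)) := ⟨_, rfl⟩
    have htri : dist (γ s) (γ t) ≤ A + B + C := by
      calc dist (γ s) (γ t) ≤ dist (γ s) (u (m + 1)) + dist (u (m + 1)) (u n)
            + dist (u n) (γ t) := dist_triangle4 _ _ _ _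
        _ = A + B + C := by rw [hA, hC, hAdef, hCdef, hBdef]
    have hA0 : 0 ≤ A := by rw [hAdef]; positivity
    have hC0 : 0 ≤ C := by rw [hCdef]; positivity
    have hAsq : A ^ 2 ≤ 2 * a * D := by
      have hd := hdistsq m
      have hdnn : (0:ℝ) ≤ dist (u m) (u (m + 1)) := dist_nonneg
      rw [hAdef, mul_pow, div_pow, div_mul_eq_mul_div,
        div_le_iff₀ (by positivity : (0:ℝ) < τ ^ 2)]
      calc a ^ 2 * dist (u m) (u (m + 1)) ^ 2
          ≤ a ^ 2 * (2 * τ * D) := mul_le_mul_of_nonneg_left hd (sq_nonneg a)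
        _ ≤ (a * τ) * (2 * τ * D) :=
            mul_le_mul_of_nonneg_right
              (by rw [sq]; exact mul_le_mul_of_nonneg_left haτ ha0) (by positivity)
        _ = 2 * a * D * τ ^ 2 := by ring
    have hCsq : C ^ 2 ≤ 2 * b * D := by
      have hd := hdistsq n
      have hdnn : (0:ℝ) ≤ dist (u n) (u (n + 1)) := dist_nonneg
      rw [hCdef, mul_pow, div_pow, div_mul_eq_mul_div,
        div_le_iff₀ (by positivity : (0:ℝ) < τ ^ 2)]
      calc b ^ 2 * dist (u n) (u (n + 1)) ^ 2
          ≤ b ^ 2 * (2 * τ * D) := mul_le_mul_of_nonneg_left hd (sq_nonneg b)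
        _ ≤ (b * τ) * (2 * τ * D) :=
            mul_le_mul_of_nonneg_right
              (by rw [sq]; exact mul_le_mul_of_nonneg_left hbτ hb0) (by positivity)
        _ = 2 * b * D * τ ^ 2 := by ring
    have hsq3 : dist (γ s) (γ t) ^ 2 ≤ 3 * (A ^ 2 + B ^ 2 + C ^ 2) :=
      (pow_le_pow_left₀ dist_nonneg htri 2).trans (three_sq_bound A B C)
    have hsumts : a + (N : ℝ) * τ + b = t - s := by
      have hcast : (n : ℝ) = (m : ℝ) + 1 + (N : ℝ) := by exact_mod_cast congrArg (Nat.cast : ℕ → ℝ) hnN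
      rw [ha, hb, hcast]; ring
    have hNτD : (N : ℝ) * (2 * τ * D) = 2 * ((N : ℝ) * τ) * D := by ring
    calc dist (γ s) (γ t) ^ 2 ≤ 3 * (A ^ 2 + B ^ 2 + C ^ 2) := hsq3
      _ ≤ 3 * (2 * a * D + (N : ℝ) * (2 * τ * D) + 2 * b * D) := by linarith
      _ = 6 * D * (a + (N : ℝ) * τ + b) := by ring
      _ = 6 * D * (t - s) := by rw [hsumts]
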